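/- Let H be a real Hilbert space and F : H → H satisfy ⟨x - y, x - y⟩ + ⟨F(x) - F(y), x - y⟩ ≥ ζ‖x - y‖² for some ζ > 0, and ‖F(x) - F(y)‖ ≤ L‖x - y‖ with ζ ≤ L + 1. Let q(·; x, v) solve q'' = -q - F(q), q(0) = x, q'(0) = v. If t > 0 satisfies t²(1 + L) ≤ ζ/(1 + L), then ‖q(t; x, v) - q(t; y, v)‖² ≤ (1 - ζ t²/12) ‖x - y‖² for all x, y, v ∈ H. -/

import Mathlib

open Set

set_option maxHeartbeats 1000000

theorem stmt_13 {H : Type*} [NormedAddCommGroup H] [InnerProductSpace ℝ H]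
    (F : H → H) (ζ L : ℝ) (hζ : 0 < ζ) (hL : 0 ≤ L) (hζL : ζ ≤ L + 1)
    (hmono : ∀ a b : H,
      (inner ℝ (a - b) (a - b) : ℝ) + (inner ℝ (F a - F b) (a - b) : ℝ) ≥ ζ * ‖a - b‖ ^ 2)
    (hF : ∀ a b : H, ‖F a - F b‖ ≤ L * ‖a - b‖)
    (q₁ p₁ q₂ p₂ : ℝ → H) (x y v : H)
    (hq₁0 : q₁ 0 = x) (hp₁0 : p₁ 0 = v) (hq₂0 : q₂ 0 = y) (hp₂0 : p₂ 0 = v)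
    (hq₁' : ∀ s : ℝ, HasDerivAt q₁ (p₁ s) s)
    (hp₁' : ∀ s : ℝ, HasDerivAt p₁ (-(q₁ s) - F (q₁ s)) s)
    (hq₂' : ∀ s : ℝ, HasDerivAt q₂ (p₂ s) s)
    (hp₂' : ∀ s : ℝ, HasDerivAt p₂ (-(q₂ s) - F (q₂ s)) s)
    (t : ℝ) (ht : 0 < t) (htL : t ^ 2 * (1 + L) ≤ ζ / (1 + L)) :
    ‖q₁ t - q₂ t‖ ^ 2 ≤ (1 - ζ * t ^ 2 / 12) * ‖x - y‖ ^ 2 := by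
  set M : ℝ := 1 + L with hMdef
  have hM1 : (1:ℝ) ≤ M := by simp [hMdef]; linarith
  have hM0 : (0:ℝ) < M := by linarith
  have hM2t2 : M ^ 2 * t ^ 2 ≤ ζ := by
    rw [le_div_iff₀ hM0] at htL
    nlinarith
  have hMt2 : M * t ^ 2 ≤ 1 := by
    have hζM : ζ ≤ M := by rw [hMdef]; linarith
    nlinarith
  set z : ℝ → H := fun s => q₁ s - q₂ s with hzdef
  set w : ℝ → H := fun s => p₁ s - p₂ s with hwdef
  set D : ℝ := ‖x - y‖ with hDdef
  have hD0 : 0 ≤ D := norm_nonneg _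
  set w' : ℝ → H := fun s => -(z s) - (F (q₁ s) - F (q₂ s)) with hw'def
  have hz_eq : ∀ s, z s = q₁ s - q₂ s := fun s => rfl
  have hw'_eq : ∀ s, w' s = -(z s) - (F (q₁ s) - F (q₂ s)) := fun s => rfl
  have hz' : ∀ s, HasDerivAt z (w s) s := fun s => (hq₁' s).sub (hq₂' s)
  have hw' : ∀ s, HasDerivAt w (w' s) s := by
    intro s
    have h := (hp₁' s).sub (hp₂' s)
    convert h using 1
    · rfl
    simp only [hw'def, hzdef]
    abel
  have hz0 : z 0 = x - y := by simp [hzdef, hq₁0, hq₂0]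
  have hw0 : w 0 = 0 := by simp [hwdef, hp₁0, hp₂0]
  have hw'bound : ∀ s, ‖w' s‖ ≤ M * ‖z s‖ := by
    intro s
    calc ‖w' s‖ ≤ ‖z s‖ + ‖F (q₁ s) - F (q₂ s)‖ := by
          simpa [hw'def] using norm_sub_le (-(z s)) (F (q₁ s) - F (q₂ s)) |>.trans (by simp)
      _ ≤ ‖z s‖ + L * ‖q₁ s - q₂ s‖ := by linarith [hF (q₁ s) (q₂ s)]
      _ = M * ‖z s‖ := by rw [← hz_eq]; rw [hMdef]; ring
  have hcont_z : Continuous z := continuous_iff_continuousAt.2 fun s => (hz' s).continuousAt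
  have hcont_w : Continuous w := continuous_iff_continuousAt.2 fun s => (hw' s).continuousAt
  set r : ℝ := Real.sqrt M with hrdef
  have hr0 : 0 < r := Real.sqrt_pos.2 hM0
  have hr2 : r ^ 2 = M := Real.sq_sqrt hM0.le
  have hrt : r * t ≤ 1 := by
    have h : r ^ 2 * t ^ 2 ≤ 1 := by rw [hr2]; exact hMt2
    nlinarith [sq_nonneg (r * t - 1), mul_nonneg hr0.le ht.le]
  have hgoal : z t = q₁ t - q₂ t := hz_eq t
  clear_value M z w D w' r
  clear hzdef hwdef hw'def hrdef hMdef htL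
  -- Step A: crude bound via Gronwall
  have hcrude : ∀ s ∈ Icc (0:ℝ) t, ‖z s‖ ≤ 3 * D := by
    set g : ℝ → H × H := fun s => (r • z s, w s) with hgdef
    have hg' : ∀ s, HasDerivAt g (r • w s, w' s) s := fun s => HasDerivAt.prodMk ((hz' s).const_smul r) (hw' s)
    have key := norm_le_gronwallBound_of_norm_deriv_right_le
      (f := g) (f' := fun s => (r • w s, w' s)) (δ := r * D) (K := r) (ε := 0) (a := 0) (b := t)
      (((hcont_z.const_smul r).prodMk hcont_w).continuousOn)
      (fun s _ => (hg' s).hasDerivWithinAt)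
      (by
        simp only [hgdef, hz0, hw0, Prod.norm_def, norm_smul, Real.norm_eq_abs,
          abs_of_nonneg hr0.le, norm_zero, ← hDdef]
        exact max_le le_rfl (mul_nonneg hr0.le hD0))
      (by
        intro s _
        rw [Prod.norm_def, Prod.norm_def]
        simp only [norm_smul, Real.norm_eq_abs, abs_of_nonneg hr0.le, add_zero]
        apply max_le
        · exact mul_le_mul_of_nonneg_left (le_max_right _ _) hr0.le
        · calc ‖w' s‖ ≤ M * ‖z s‖ := hw'bound s
            _ = r * (r * ‖z s‖) := by rw [← hr2]; ring
            _ ≤ r * max (r * ‖z s‖) ‖w s‖ := mul_le_mul_of_nonneg_left (le_max_left _ _) hr0.le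
            _ = r * max ‖(g s).1‖ ‖(g s).2‖ := by simp [hgdef, norm_smul, abs_of_nonneg hr0.le])
    intro s hs
    have h1 := key s hs
    rw [gronwallBound_ε0] at h1
    have h2 : r * ‖z s‖ ≤ ‖g s‖ := by
      rw [hgdef]
      simp only [Prod.norm_def, norm_smul, Real.norm_eq_abs, abs_of_nonneg hr0.le]
      exact le_max_left _ _
    have hexp : Real.exp (r * (s - 0)) ≤ 3 := by
      have hrs : r * (s - 0) ≤ 1 := by
        have : r * s ≤ r * t := mul_le_mul_of_nonneg_left hs.2 hr0.le
        simpa using this.trans hrt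
      calc Real.exp (r * (s - 0)) ≤ Real.exp 1 := Real.exp_le_exp.2 hrs
        _ ≤ 3 := by
            have := Real.exp_one_lt_d9
            linarith
    have h5 : r * ‖z s‖ ≤ r * (3 * D) := by
      have h4 : r * D * Real.exp (r * (s - 0)) ≤ r * D * 3 :=
        mul_le_mul_of_nonneg_left hexp (mul_nonneg hr0.le hD0)
      calc r * ‖z s‖ ≤ ‖g s‖ := h2
        _ ≤ r * D * Real.exp (r * (s - 0)) := h1
        _ ≤ r * D * 3 := h4
        _ = r * (3 * D) := by ring
    exact (mul_le_mul_iff_right₀ hr0).mp h5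
  -- Step B: first bound on w
  have hwb1 : ∀ s ∈ Icc (0:ℝ) t, ‖w s‖ ≤ 3 * M * D * s := by
    have key := image_norm_le_of_norm_deriv_right_le_deriv_boundary
      (f := w) (f' := w') (a := 0) (b := t)
      hcont_w.continuousOn (fun s _ => (hw' s).hasDerivWithinAt)
      (B := fun s => 3 * M * D * s) (B' := fun _ => 3 * M * D)
      (by simp [hw0])
      (fun u => by simpa using (hasDerivAt_id u).const_mul (3 * M * D))
      (fun s hs => by
        show ‖w' s‖ ≤ 3 * M * D
        have hc := hcrude s (Ico_subset_Icc_self hs)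
        calc ‖w' s‖ ≤ M * ‖z s‖ := hw'bound s
          _ ≤ M * (3 * D) := mul_le_mul_of_nonneg_left hc hM0.le
          _ = 3 * M * D := by ring)
    intro s hs; exact key hs
  -- Step C: z stays close to x - y
  have hzx : ∀ s ∈ Icc (0:ℝ) t, ‖z s - (x - y)‖ ≤ 3 / 2 * M * D * s ^ 2 := by
    have key := image_norm_le_of_norm_deriv_right_le_deriv_boundary
      (f := fun s => z s - (x - y)) (f' := w) (a := 0) (b := t)
      (hcont_z.sub continuous_const).continuousOn
      (fun s _ => ((hz' s).sub_const _).hasDerivWithinAt)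
      (B := fun s => 3 / 2 * M * D * s ^ 2) (B' := fun s => 3 / 2 * M * D * (2 * s))
      (by simp [hz0])
      (fun u => by simpa using (hasDerivAt_pow 2 u).const_mul (3 / 2 * M * D))
      (fun s hs => by
        show ‖w s‖ ≤ 3 / 2 * M * D * (2 * s)
        calc ‖w s‖ ≤ 3 * M * D * s := hwb1 s (Ico_subset_Icc_self hs)
          _ = 3 / 2 * M * D * (2 * s) := by ring)
    intro s hs; exact key hs
  have hzup : ∀ s ∈ Icc (0:ℝ) t, ‖z s‖ ≤ D + 3 / 2 * M * D * s ^ 2 := by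
    intro s hs
    calc ‖z s‖ = ‖(x - y) + (z s - (x - y))‖ := by congr 1; abel
      _ ≤ ‖x - y‖ + ‖z s - (x - y)‖ := norm_add_le _ _
      _ ≤ D + 3 / 2 * M * D * s ^ 2 := by
          rw [← hDdef]; linarith [hzx s hs]
  have hMs2 : ∀ s ∈ Icc (0:ℝ) t, M * s ^ 2 ≤ 1 := by
    intro s hs
    have h1 : s ^ 2 ≤ t ^ 2 := by nlinarith [hs.1, hs.2]
    nlinarith [hMt2, hM0]
  -- Step D: refined bound on w
  have hwb2 : ∀ s ∈ Icc (0:ℝ) t, ‖w s‖ ≤ 3 / 2 * M * D * s := by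
    have key := image_norm_le_of_norm_deriv_right_le_deriv_boundary
      (f := w) (f' := w') (a := 0) (b := t)
      hcont_w.continuousOn (fun s _ => (hw' s).hasDerivWithinAt)
      (B := fun s => M * D * s + M ^ 2 * D / 2 * s ^ 3)
      (B' := fun s => M * D + M ^ 2 * D / 2 * (3 * s ^ 2))
      (by simp [hw0])
      (fun u => by
        have h := ((hasDerivAt_id u).const_mul (M * D)).add
          ((hasDerivAt_pow 3 u).const_mul (M ^ 2 * D / 2))
        have heq : (fun x : ℝ => M * D * id x + M ^ 2 * D / 2 * x ^ 3)
            = fun s : ℝ => M * D * s + M ^ 2 * D / 2 * s ^ 3 := by funext u; simp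
        rw [show ((fun y => M * D * id y) + fun y : ℝ => M ^ 2 * D / 2 * y ^ 3)
            = fun s : ℝ => M * D * s + M ^ 2 * D / 2 * s ^ 3 from by funext u; simp] at h
        exact h.congr_deriv (by push_cast; ring))
      (fun s hs => by
        show ‖w' s‖ ≤ M * D + M ^ 2 * D / 2 * (3 * s ^ 2)
        have h3 := hzup s (Ico_subset_Icc_self hs)
        calc ‖w' s‖ ≤ M * ‖z s‖ := hw'bound s
          _ ≤ M * (D + 3 / 2 * M * D * s ^ 2) := mul_le_mul_of_nonneg_left h3 hM0.le
          _ = M * D + M ^ 2 * D / 2 * (3 * s ^ 2) := by ring)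
    intro s hs
    have h4 := key hs
    have h5 := hMs2 s hs
    nlinarith [mul_nonneg (mul_nonneg (mul_nonneg hM0.le hD0) hs.1) (sub_nonneg.2 h5)]
  -- lower bound on ‖z s‖²
  have hzsqlow : ∀ s ∈ Icc (0:ℝ) t, D ^ 2 - 3 * M * D ^ 2 * s ^ 2 ≤ ‖z s‖ ^ 2 := by
    intro s hs
    have hdec : z s = (x - y) + (z s - (x - y)) := by abel
    have hns := norm_add_sq_real (x - y) (z s - (x - y))
    rw [← hdec] at hns
    have hcs : -(‖x - y‖ * ‖z s - (x - y)‖) ≤ (inner ℝ (x - y) (z s - (x - y)) : ℝ) :=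
      neg_le_of_abs_le (abs_real_inner_le_norm _ _) |>.trans_eq rfl
    have he := hzx s hs
    have hD : ‖x - y‖ = D := hDdef.symm
    rw [hD] at hns hcs
    nlinarith [sq_nonneg ‖z s - (x - y)‖, mul_le_mul_of_nonneg_left he hD0,
      norm_nonneg (z s - (x - y))]
  -- comparison for the inner product ⟪z, w⟫
  have hb : ∀ s ∈ Icc (0:ℝ) t,
      (inner ℝ (z s) (w s) : ℝ) ≤ 3 / 4 * M ^ 2 * D ^ 2 * s ^ 3 + ζ * M * D ^ 2 * s ^ 3
        - ζ * D ^ 2 * s := by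
    have hBd : ∀ u : ℝ, HasDerivAt
        (fun s : ℝ => 3 / 4 * M ^ 2 * D ^ 2 * s ^ 3 + ζ * M * D ^ 2 * s ^ 3 - ζ * D ^ 2 * s)
        (3 / 4 * M ^ 2 * D ^ 2 * (3 * u ^ 2) + ζ * M * D ^ 2 * (3 * u ^ 2) - ζ * D ^ 2) u := by
      intro u
      have h := (((hasDerivAt_pow 3 u).const_mul (3 / 4 * M ^ 2 * D ^ 2)).add
        ((hasDerivAt_pow 3 u).const_mul (ζ * M * D ^ 2))).sub
        ((hasDerivAt_id u).const_mul (ζ * D ^ 2))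
      exact h.congr_deriv (by push_cast; ring)
    have key := image_le_of_deriv_right_le_deriv_boundary
      (f := fun s => (inner ℝ (z s) (w s) : ℝ))
      (f' := fun s => (inner ℝ (z s) (w' s) : ℝ) + (inner ℝ (w s) (w s) : ℝ))
      (a := 0) (b := t)
      (Continuous.continuousOn (by exact hcont_z.inner hcont_w))
      (fun s _ => (HasDerivAt.inner ℝ (hz' s) (hw' s)).hasDerivWithinAt)
      (by simp [hz0, hw0])
      (fun u _ => (hBd u).continuousAt.continuousWithinAt)
      (fun u _ => (hBd u).hasDerivWithinAt)
      (by
        intro s hs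
        show (inner ℝ (z s) (w' s) : ℝ) + (inner ℝ (w s) (w s) : ℝ)
          ≤ 3 / 4 * M ^ 2 * D ^ 2 * (3 * s ^ 2) + ζ * M * D ^ 2 * (3 * s ^ 2) - ζ * D ^ 2
        have hm := hmono (q₁ s) (q₂ s)
        rw [← hz_eq s] at hm
        have hiz : (inner ℝ (z s) (w' s) : ℝ)
            = -((inner ℝ (z s) (z s) : ℝ) + (inner ℝ (F (q₁ s) - F (q₂ s)) (z s) : ℝ)) := by
          rw [hw'_eq s, inner_sub_right, inner_neg_right,
            real_inner_comm (z s) (F (q₁ s) - F (q₂ s))]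
          ring
        have hzz : (inner ℝ (z s) (w' s) : ℝ) ≤ -(ζ * ‖z s‖ ^ 2) := by
          rw [hiz]; linarith
        have hww : (inner ℝ (w s) (w s) : ℝ) = ‖w s‖ ^ 2 := real_inner_self_eq_norm_sq _
        have hw2 := hwb2 s (Ico_subset_Icc_self hs)
        have hlow := hzsqlow s (Ico_subset_Icc_self hs)
        have h1 : ζ * (D ^ 2 - 3 * M * D ^ 2 * s ^ 2) ≤ ζ * ‖z s‖ ^ 2 :=
          mul_le_mul_of_nonneg_left hlow hζ.le
        have h2 : ‖w s‖ ^ 2 ≤ 9 / 4 * M ^ 2 * D ^ 2 * s ^ 2 := by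
          nlinarith [norm_nonneg (w s), mul_nonneg (mul_nonneg (mul_nonneg
            (by norm_num : (0:ℝ) ≤ 3/2) hM0.le) hD0) hs.1]
        rw [hww]
        linarith)
    intro s hs; exact key hs
  -- comparison for ‖z‖²
  have ha : ∀ s ∈ Icc (0:ℝ) t,
      (inner ℝ (z s) (z s) : ℝ) ≤ D ^ 2 + 3 / 8 * M ^ 2 * D ^ 2 * s ^ 4
        + ζ * M * D ^ 2 / 2 * s ^ 4 - ζ * D ^ 2 * s ^ 2 := by
    have hBd : ∀ u : ℝ, HasDerivAt
        (fun s : ℝ => D ^ 2 + 3 / 8 * M ^ 2 * D ^ 2 * s ^ 4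
          + ζ * M * D ^ 2 / 2 * s ^ 4 - ζ * D ^ 2 * s ^ 2)
        (3 / 8 * M ^ 2 * D ^ 2 * (4 * u ^ 3) + ζ * M * D ^ 2 / 2 * (4 * u ^ 3)
          - ζ * D ^ 2 * (2 * u)) u := by
      intro u
      have h := (((hasDerivAt_const u (D ^ 2)).add
        ((hasDerivAt_pow 4 u).const_mul (3 / 8 * M ^ 2 * D ^ 2))).add
        ((hasDerivAt_pow 4 u).const_mul (ζ * M * D ^ 2 / 2))).sub
        ((hasDerivAt_pow 2 u).const_mul (ζ * D ^ 2))
      exact h.congr_deriv (by push_cast; ring)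
    have key := image_le_of_deriv_right_le_deriv_boundary
      (f := fun s => (inner ℝ (z s) (z s) : ℝ))
      (f' := fun s => (inner ℝ (z s) (w s) : ℝ) + (inner ℝ (w s) (z s) : ℝ))
      (a := 0) (b := t)
      (Continuous.continuousOn (by exact hcont_z.inner hcont_z))
      (fun s _ => (HasDerivAt.inner ℝ (hz' s) (hz' s)).hasDerivWithinAt)
      (by simp [hz0, real_inner_self_eq_norm_sq, hDdef])
      (fun u _ => (hBd u).continuousAt.continuousWithinAt)
      (fun u _ => (hBd u).hasDerivWithinAt)
      (by
        intro s hs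
        show (inner ℝ (z s) (w s) : ℝ) + (inner ℝ (w s) (z s) : ℝ)
          ≤ 3 / 8 * M ^ 2 * D ^ 2 * (4 * s ^ 3) + ζ * M * D ^ 2 / 2 * (4 * s ^ 3)
            - ζ * D ^ 2 * (2 * s)
        have hbs := hb s (Ico_subset_Icc_self hs)
        have hbs' : (inner ℝ (w s) (z s) : ℝ) ≤ 3 / 4 * M ^ 2 * D ^ 2 * s ^ 3
            + ζ * M * D ^ 2 * s ^ 3 - ζ * D ^ 2 * s := by
          rw [real_inner_comm]; exact hbs
        linarith)
    intro s hs; exact key hs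
  -- conclusion
  have hat := ha t ⟨ht.le, le_rfl⟩
  have hzt : (inner ℝ (z t) (z t) : ℝ) = ‖q₁ t - q₂ t‖ ^ 2 := by
    rw [real_inner_self_eq_norm_sq, hgoal]
  rw [hzt] at hat
  have h1 : M ^ 2 * t ^ 2 * (t ^ 2 * D ^ 2) ≤ ζ * (t ^ 2 * D ^ 2) :=
    mul_le_mul_of_nonneg_right hM2t2 (by positivity)
  have h2 : M * t ^ 2 * (ζ * t ^ 2 * D ^ 2) ≤ 1 * (ζ * t ^ 2 * D ^ 2) :=
    mul_le_mul_of_nonneg_right hMt2 (by positivity)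
  nlinarith [h1, h2, mul_nonneg (mul_nonneg hζ.le (sq_nonneg t)) (sq_nonneg D)]
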